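/- Let X ~ P with law of T°(X) continuous, and let T_n be random functions (depending on auxiliary data D_n independent of X) with T_n(X) → T°(X) in probability. Define π_n(x) := F̂_n(T_n(x)) where F̂_n is the empirical survival function of T°(Z_1),...,T°(Z_N) with Z_i i.i.d. ~ P independent of X, N = N(n) → ∞. Then π_n(X) → π°(X) := F(T°(X)) in probability, where F(r) = P(T° ≥ r). -/

import Mathlib

open MeasureTheory ProbabilityTheory Filter

open Set Topology
open scoped ENNReal


-- continuity of survival function of an atomless (prob) measure
lemma surv_continuous (ν : Measure ℝ) [IsProbabilityMeasure ν] (hν : ∀ c : ℝ, ν {c} = 0) :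
    Continuous (fun r => (ν (Ici r)).toReal) := by
  rw [continuous_iff_continuousAt]
  intro r
  rw [Metric.continuousAt_iff]
  intro ε hε
  have hint : Tendsto (fun n : ℕ => ν (Icc (r - 1/(n+1)) (r + 1/(n+1)))) atTop (𝓝 (ν {r})) := by
    have h1 : ⋂ n : ℕ, Icc (r - 1/(n+1)) (r + 1/(n+1)) = {r} := by
      ext x
      simp only [mem_iInter, mem_Icc, mem_singleton_iff]
      constructor
      · intro h
        have h2 : ∀ n : ℕ, |x - r| ≤ 1/(n+1) := by
          intro n
          rw [abs_sub_le_iff]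
          constructor <;> linarith [(h n).1, (h n).2]
        have h3 : |x - r| ≤ 0 := by
          by_contra hpos
          push_neg at hpos
          obtain ⟨n, hn⟩ := exists_nat_one_div_lt hpos
          exact absurd (h2 n) (not_le.mpr hn)
        have h4 : |x - r| = 0 := le_antisymm h3 (abs_nonneg _)
        have h5 := abs_eq_zero.mp h4
        linarith
      · rintro rfl
        intro n
        constructor <;> nlinarith [Nat.cast_nonneg (α := ℝ) n, one_div_pos.mpr (show (0:ℝ) < n+1 by positivity)]
    have h2 : Antitone (fun n : ℕ => Icc (r - 1/(n+1)) (r + 1/(n+1))) := by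
      intro m n hmn
      have hc : ((m:ℝ)+1) ≤ ((n:ℝ)+1) := by exact_mod_cast Nat.succ_le_succ hmn
      have : 1/((n:ℝ)+1) ≤ 1/((m:ℝ)+1) := one_div_le_one_div_of_le (by positivity) hc
      apply Icc_subset_Icc <;> linarith
    have := tendsto_measure_iInter_atTop (μ := ν)
      (fun n => (measurableSet_Icc).nullMeasurableSet) h2 ⟨0, measure_ne_top _ _⟩
    rwa [h1] at this
  rw [hν r] at hint
  have hev : ∀ᶠ n : ℕ in atTop, ν (Icc (r - 1/(n+1)) (r + 1/(n+1))) < ENNReal.ofReal ε :=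
    hint.eventually_lt_const (by simpa using hε)
  obtain ⟨n, hn⟩ := hev.exists
  refine ⟨1/(n+1), by positivity, fun {s} hs => ?_⟩
  have key : ∀ u v : ℝ, u ≤ v → (ν (Ici u)).toReal - (ν (Ici v)).toReal = (ν (Ico u v)).toReal := by
    intro u v huv
    have hdisj : Disjoint (Ico u v) (Ici v) := by
      apply Set.disjoint_left.mpr
      intro x hx hx2
      exact absurd hx2 (not_le.mpr hx.2)
    have hunion : Ico u v ∪ Ici v = Ici u := Ico_union_Ici_eq_Ici huv
    have := measure_union (μ := ν) hdisj measurableSet_Ici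
    rw [hunion] at this
    rw [this, ENNReal.toReal_add (measure_ne_top _ _) (measure_ne_top _ _)]
    ring
  rw [Real.dist_eq] at hs ⊢
  have hsub : ∀ u v : ℝ, r - 1/(n+1) ≤ u → v ≤ r + 1/(n+1) → (ν (Ico u v)).toReal < ε := by
    intro u v hu hv
    have h1 : Ico u v ⊆ Icc (r - 1/(n+1)) (r + 1/(n+1)) := fun x hx => ⟨le_trans hu hx.1, le_trans (le_of_lt hx.2) hv⟩
    have h2 : ν (Ico u v) < ENNReal.ofReal ε := lt_of_le_of_lt (measure_mono h1) hn
    have h3 : (ν (Ico u v)).toReal < (ENNReal.ofReal ε).toReal :=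
      ENNReal.toReal_strict_mono (by simp) h2
    rwa [ENNReal.toReal_ofReal hε.le] at h3

  have habs := abs_sub_lt_iff.mp hs
  have hpos : (0:ℝ) < 1/((n:ℝ)+1) := by positivity
  rcases le_total s r with h | h
  · rw [abs_of_nonneg (by
      have := ENNReal.toReal_mono (measure_ne_top ν _) (measure_mono (Ici_subset_Ici.mpr h))
      linarith)]
    rw [key s r h]
    exact hsub s r (by linarith [habs.2]) (by linarith)
  · rw [abs_sub_comm, abs_of_nonneg (by
      have := ENNReal.toReal_mono (measure_ne_top ν _) (measure_mono (Ici_subset_Ici.mpr h))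
      linarith)]
    rw [key r s h]
    exact hsub r s (by linarith) (by linarith [habs.1])


-- tails
lemma surv_tail_lo (ν : Measure ℝ) [IsProbabilityMeasure ν] {δ : ℝ} (hδ : 0 < δ) :
    ∃ a : ℝ, 1 - δ ≤ (ν (Ici a)).toReal := by
  rcases le_or_gt (1 - δ) 0 with htriv | hpos1
  · exact ⟨0, le_trans htriv ENNReal.toReal_nonneg⟩
  have hU : ⋃ n : ℕ, Ici (-(n:ℝ)) = univ := by
    ext x; simp only [mem_iUnion, mem_Ici, mem_univ, iff_true]
    obtain ⟨n, hn⟩ := exists_nat_ge (-x)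
    exact ⟨n, by linarith⟩
  have hmono : Monotone (fun n : ℕ => Ici (-(n:ℝ))) := by
    intro m n hmn
    apply Ici_subset_Ici.mpr
    simp only [neg_le_neg_iff]
    exact_mod_cast hmn
  have := tendsto_measure_iUnion_atTop (μ := ν) hmono
  rw [hU, measure_univ] at this
  have hlt : ENNReal.ofReal (1 - δ) < 1 := by
    rcases le_or_gt (1 - δ) 0 with h | h
    · rw [ENNReal.ofReal_eq_zero.mpr h]; exact zero_lt_one
    · rw [← ENNReal.ofReal_one]
      exact ENNReal.ofReal_lt_ofReal_iff_of_nonneg h.le |>.mpr (by linarith)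
  obtain ⟨n, hn⟩ := (this.eventually_const_lt hlt).exists
  refine ⟨-(n:ℝ), ?_⟩
  have := ENNReal.toReal_mono (measure_ne_top ν _) hn.le
  rwa [ENNReal.toReal_ofReal hpos1.le] at this

lemma surv_tail_hi (ν : Measure ℝ) [IsProbabilityMeasure ν] {δ : ℝ} (hδ : 0 < δ) :
    ∃ b : ℝ, (ν (Ici b)).toReal ≤ δ := by
  have hI : ⋂ n : ℕ, Ici ((n:ℝ)) = ∅ := by
    ext x; simp only [mem_iInter, mem_Ici, mem_empty_iff_false, iff_false, not_forall, not_le]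
    obtain ⟨n, hn⟩ := exists_nat_gt x
    exact ⟨n, hn⟩
  have hmono : Antitone (fun n : ℕ => Ici ((n:ℝ))) := by
    intro m n hmn; apply Ici_subset_Ici.mpr; exact_mod_cast hmn
  have := tendsto_measure_iInter_atTop (μ := ν)
    (fun n => measurableSet_Ici.nullMeasurableSet) hmono ⟨0, measure_ne_top _ _⟩
  rw [hI, measure_empty] at this
  have hpos : (0 : ℝ≥0∞) < ENNReal.ofReal δ := by simpa using hδ
  obtain ⟨n, hn⟩ := (this.eventually_lt_const hpos).exists
  refine ⟨(n:ℝ), ?_⟩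
  have := ENNReal.toReal_mono (by simp) hn.le
  rwa [ENNReal.toReal_ofReal hδ.le] at this

-- grid existence
lemma grid_exists {H : ℝ → ℝ} (hanti : Antitone H) (hcont : Continuous H)
    (h0 : ∀ r, 0 ≤ H r) (h1 : ∀ r, H r ≤ 1) {δ : ℝ} (hδ : 0 < δ)
    {a b : ℝ} (hab : a ≤ b) (ha : 1 - δ ≤ H a) (hb : H b ≤ δ) :
    ∃ (k : ℕ) (p : ℕ → ℝ), 1 - δ ≤ H (p 0) ∧ H (p k) ≤ δ ∧
      ∀ j < k, H (p j) - H (p (j+1)) ≤ δ := by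
  obtain ⟨k, hk⟩ := exists_nat_ge (1/δ)
  have hkδ : 1 ≤ (k:ℝ) * δ := by
    rw [div_le_iff₀ hδ] at hk
    linarith
  set c : ℕ → ℝ := fun j => max (H b) (H a - j * δ) with hc
  have hcmem : ∀ j, c j ∈ Icc (H b) (H a) := by
    intro j
    constructor
    · exact le_max_left _ _
    · apply max_le (hanti hab)
      have : (0:ℝ) ≤ j * δ := by positivity
      linarith
  have hchoice : ∀ j, ∃ x ∈ Icc a b, H x = c j := by
    intro j
    have := intermediate_value_Icc' hab hcont.continuousOn (hcmem j)
    obtain ⟨x, hx, hHx⟩ := this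
    exact ⟨x, hx, hHx⟩
  choose p hp hHp using hchoice
  refine ⟨k, p, ?_, ?_, ?_⟩
  · rw [hHp 0]
    simp only [hc, Nat.cast_zero, zero_mul, sub_zero]
    rw [max_eq_right (hanti hab)]
    exact ha
  · rw [hHp k]
    have : H a - k * δ ≤ H b := by
      have := h1 a; have := h0 b
      linarith
    simp only [hc]
    rw [max_eq_left this]
    exact hb
  · intro j hj
    rw [hHp j, hHp (j+1)]
    simp only [hc]
    have : H a - (j:ℝ) * δ ≤ (H a - ((j:ℝ)+1) * δ) + δ := by ring_nf; simp
    push_cast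
    rcases le_total (H b) (H a - ((j:ℝ)+1) * δ) with h | h
    · rw [max_eq_right h, max_eq_right (by linarith)]
      linarith
    · rw [max_eq_left h]
      apply sub_le_iff_le_add.mpr
      apply max_le (by linarith)
      linarith

-- deterministic uniform bound from grid bound
lemma det_bound {G H : ℝ → ℝ} (hGa : Antitone G) (hHa : Antitone H)
    (hG0 : ∀ r, 0 ≤ G r) (hG1 : ∀ r, G r ≤ 1) (hH0 : ∀ r, 0 ≤ H r) (hH1 : ∀ r, H r ≤ 1)
    {δ η : ℝ} (hη : 0 ≤ η) {k : ℕ} {p : ℕ → ℝ}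
    (hlo : 1 - δ ≤ H (p 0)) (hhi : H (p k) ≤ δ)
    (hgap : ∀ j < k, H (p j) - H (p (j+1)) ≤ δ)
    (hM : ∀ j ≤ k, |G (p j) - H (p j)| ≤ η) :
    ∀ r, |G r - H r| ≤ η + δ := by
  classical
  intro r
  rw [abs_sub_le_iff]
  constructor
  · -- G r - H r ≤ η + δ
    by_cases hc : H r < H (p 0)
    · set P : ℕ → Prop := fun j => H r < H (p j) with hP
      set j := Nat.findGreatest P k with hj
      have hPj : P j := Nat.findGreatest_spec (Nat.zero_le k) hc
      have hjk : j ≤ k := Nat.findGreatest_le k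
      have hple : p j ≤ r := by
        by_contra hlt
        push_neg at hlt
        exact absurd (hHa hlt.le) (not_le.mpr hPj)
      have hG : G r ≤ H (p j) + η := by
        have h1 := hGa hple
        have h2 := abs_le.mp (hM j hjk)
        linarith [h2.1]
      have hH : H (p j) ≤ H r + δ := by
        rcases eq_or_lt_of_le hjk with heq | hlt
        · rw [heq]; linarith [hH0 r]
        · have hnot : ¬ P (j+1) := Nat.findGreatest_is_greatest (Nat.lt_succ_self j) hlt
          replace hnot : H (p (j+1)) ≤ H r := not_lt.mp hnot
          have := hgap j hlt
          linarith
      linarith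
    · push_neg at hc
      have := hG1 r
      linarith
  · -- H r - G r ≤ η + δ
    by_cases hc : H (p k) < H r
    · have hex : ∃ j, H (p j) < H r := ⟨k, hc⟩
      obtain ⟨j, hQj, hmin⟩ : ∃ j, H (p j) < H r ∧ ∀ i < j, ¬ H (p i) < H r :=
        ⟨Nat.find hex, Nat.find_spec hex, fun i h => Nat.find_min hex h⟩
      have hjk : j ≤ k := by
        by_contra hgt
        push_neg at hgt
        exact hmin k hgt hc
      have hrle : r ≤ p j := by
        by_contra hlt
        push_neg at hlt
        exact absurd (hHa hlt.le) (not_le.mpr hQj)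
      have hG : H (p j) - η ≤ G r := by
        have h1 := hGa hrle
        have h2 := abs_le.mp (hM j hjk)
        linarith [h2.2]
      have hH : H r - δ ≤ H (p j) := by
        rcases Nat.eq_zero_or_pos j with heq | hpos
        · rw [heq]; have := hH1 r; linarith
        · have hnot := hmin (j-1) (by omega)
          push_neg at hnot
          have hgap' := hgap (j-1) (by omega)
          have hjeq : j - 1 + 1 = j := by omega
          rw [hjeq] at hgap'
          linarith
      linarith
    · push_neg at hc
      have := hG0 r
      linarith

-- convergence in measure composed with a continuous function
lemma tendstoInMeasure_comp_continuous {Ω : Type*} [MeasurableSpace Ω]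
    {P : Measure Ω} [IsFiniteMeasure P] {f : ℕ → Ω → ℝ} {g : Ω → ℝ} {F : ℝ → ℝ}
    (hF : Continuous F) (hf : ∀ n, AEStronglyMeasurable (f n) P)
    (h : TendstoInMeasure P f atTop g) :
    TendstoInMeasure P (fun n ω => F (f n ω)) atTop (fun ω => F (g ω)) := by
  intro ε hε
  apply tendsto_of_subseq_tendsto
  intro ns hns
  have hsub : TendstoInMeasure P (fun k => f (ns k)) atTop g := by
    intro δ hδ
    exact (h δ hδ).comp hns
  obtain ⟨ms, _, hae⟩ := hsub.exists_seq_tendsto_ae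
  have hae' : ∀ᵐ ω ∂P, Tendsto (fun k => F (f (ns (ms k)) ω)) atTop (𝓝 (F (g ω))) := by
    filter_upwards [hae] with ω hω
    exact ((hF.tendsto _).comp hω)
  have hmeas : ∀ k, AEStronglyMeasurable (fun ω => F (f (ns (ms k)) ω)) P :=
    fun k => hF.comp_aestronglyMeasurable (hf _)
  have := tendstoInMeasure_of_tendsto_ae hmeas hae'
  exact ⟨ms, this ε hε⟩

-- SLLN for the empirical survival function at a fixed point r
lemma empirical_slln {Ω 𝓧 : Type*} [MeasurableSpace Ω] [MeasurableSpace 𝓧]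
    (P : Measure Ω) [IsProbabilityMeasure P]
    (μ : Measure 𝓧) [IsProbabilityMeasure μ]
    (T0 : 𝓧 → ℝ) (hT0 : Measurable T0)
    (Z : ℕ → Ω → 𝓧) (hZmeas : ∀ i, Measurable (Z i))
    (hZiid : iIndepFun Z P)
    (hZlaw : ∀ i, Measure.map (Z i) P = μ) (r : ℝ) :
    ∀ᵐ ω ∂P, Tendsto (fun N : ℕ =>
        (((Finset.range N).filter fun i => r ≤ T0 (Z i ω)).card : ℝ) / N)
      atTop (𝓝 ((μ {x | r ≤ T0 x}).toReal)) := by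
  set s : Set 𝓧 := {x | r ≤ T0 x} with hs
  have hsm : MeasurableSet s := hT0 measurableSet_Ici
  set g : 𝓧 → ℝ := s.indicator (fun _ => (1:ℝ)) with hg
  have hgm : Measurable g := measurable_const.indicator hsm
  set Y : ℕ → Ω → ℝ := fun i ω => g (Z i ω) with hY
  have hYm : ∀ i, Measurable (Y i) := fun i => hgm.comp (hZmeas i)
  have hint : Integrable (Y 0) P := by
    have : Y 0 = (Z 0 ⁻¹' s).indicator (fun _ => (1:ℝ)) := by
      classical
      ext ω
      by_cases h : Z 0 ω ∈ s <;>
        simp [hY, hg, Set.indicator_apply, Set.mem_preimage, h]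
    rw [this]
    exact (integrable_const (1:ℝ)).indicator (hZmeas 0 hsm)
  have hindep : Pairwise (Function.onFun (IndepFun · · P) Y) := by
    intro i j hij
    exact (hZiid.comp (fun _ => g) (fun _ => hgm)).indepFun hij
  have hident : ∀ i, IdentDistrib (Y i) (Y 0) P P := by
    intro i
    have hz : IdentDistrib (Z i) (Z 0) P P :=
      ⟨(hZmeas i).aemeasurable, (hZmeas 0).aemeasurable, by rw [hZlaw i, hZlaw 0]⟩
    exact hz.comp hgm
  have hmean : P[Y 0] = (μ s).toReal := by
    have h1 : P[Y 0] = ∫ x, g x ∂(Measure.map (Z 0) P) :=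
      (integral_map (hZmeas 0).aemeasurable hgm.aestronglyMeasurable).symm
    rw [h1, hZlaw 0, hg, integral_indicator_const (1:ℝ) hsm]
    simp
    rfl
  have := strong_law_ae_real Y hint hindep hident
  rw [hmean] at this
  filter_upwards [this] with ω hω
  have heq : ∀ N : ℕ, (∑ i ∈ Finset.range N, Y i ω) / N =
      (((Finset.range N).filter fun i => r ≤ T0 (Z i ω)).card : ℝ) / N := by
    intro N
    congr 1
    rw [← Finset.sum_boole]
    apply Finset.sum_congr rfl
    intro i _
    by_cases h : r ≤ T0 (Z i ω) <;>
      simp [hY, hg, Set.indicator_apply, hs, Set.mem_setOf_eq, h]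
  exact Tendsto.congr heq hω

/-- empirical survival function evaluated at a consistent
statistic converges in probability to the oracle p-value. -/
theorem stmt17 {Ω 𝓧 : Type*} [MeasurableSpace Ω] [MeasurableSpace 𝓧]
    (P : Measure Ω) [IsProbabilityMeasure P]
    (μ : Measure 𝓧) [IsProbabilityMeasure μ]
    (X : Ω → 𝓧) (hX : Measurable X) (hXlaw : Measure.map X P = μ)
    (T0 : 𝓧 → ℝ) (hT0 : Measurable T0)
    (hcont : ∀ c : ℝ, μ {x | T0 x = c} = 0)
    (Tn : ℕ → Ω → ℝ) (hTnmeas : ∀ n, Measurable (Tn n))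
    (hTn : TendstoInMeasure P Tn atTop (fun ω => T0 (X ω)))
    (Z : ℕ → Ω → 𝓧) (hZmeas : ∀ i, Measurable (Z i))
    (hZiid : iIndepFun Z P)
    (hZlaw : ∀ i, Measure.map (Z i) P = μ)
    (hindep : ∀ n, IndepFun (fun ω => (X ω, Tn n ω)) (fun ω i => Z i ω) P)
    (Nn : ℕ → ℕ) (hNn : Tendsto Nn atTop atTop)
    (Fhat : ℕ → Ω → ℝ → ℝ)
    (hFhat : ∀ n ω r, Fhat n ω r =
      (((Finset.range (Nn n)).filter fun i => r ≤ T0 (Z i ω)).card : ℝ) / (Nn n))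
    (F : ℝ → ℝ) (hF : ∀ r, F r = (μ {x | r ≤ T0 x}).toReal) :
    TendstoInMeasure P (fun n ω => Fhat n ω (Tn n ω)) atTop
      (fun ω => F (T0 (X ω))) := by
  classical
  set ν : Measure ℝ := Measure.map T0 μ with hν
  haveI : IsProbabilityMeasure ν := Measure.isProbabilityMeasure_map hT0.aemeasurable
  have hIci : ∀ r : ℝ, ν (Ici r) = μ {x | r ≤ T0 x} := by
    intro r
    rw [hν, Measure.map_apply hT0 measurableSet_Ici]
    rfl
  have hsing : ∀ c : ℝ, ν {c} = 0 := by
    intro c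
    rw [hν, Measure.map_apply hT0 (measurableSet_singleton c)]
    exact hcont c
  set G : ℝ → ℝ := fun r => (ν (Ici r)).toReal with hG
  have hGF : ∀ r, F r = G r := by
    intro r
    rw [hF r]
    exact congrArg ENNReal.toReal (hIci r).symm
  have hGanti : Antitone G := fun u v huv =>
    ENNReal.toReal_mono (measure_ne_top _ _) (measure_mono (Ici_subset_Ici.mpr huv))
  have hG0 : ∀ r, 0 ≤ G r := fun r => ENNReal.toReal_nonneg
  have hG1 : ∀ r, G r ≤ 1 := by
    intro r
    have h1 : ν (Ici r) ≤ 1 := prob_le_one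
    have := ENNReal.toReal_mono ENNReal.one_ne_top h1
    simpa using this
  have hGcont : Continuous G := surv_continuous ν hsing
  -- properties of Fhat
  have hFanti : ∀ n ω, Antitone (Fhat n ω) := by
    intro n ω u v huv
    rw [hFhat, hFhat]
    gcongr
  have hF0 : ∀ n ω r, 0 ≤ Fhat n ω r := by
    intro n ω r
    rw [hFhat]
    positivity
  have hF1 : ∀ n ω r, Fhat n ω r ≤ 1 := by
    intro n ω r
    rw [hFhat]
    rcases Nat.eq_zero_or_pos (Nn n) with h | h
    · simp [h]
    · rw [div_le_one (by exact_mod_cast h)]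
      exact_mod_cast (Finset.card_filter_le _ _).trans_eq (Finset.card_range _)
  have hFhatMeas : ∀ n (c : ℝ), Measurable fun ω => Fhat n ω c := by
    intro n c
    have heq : (fun ω => Fhat n ω c) = fun ω =>
        (∑ i ∈ Finset.range (Nn n), if c ≤ T0 (Z i ω) then (1:ℝ) else 0) / (Nn n) := by
      ext ω
      rw [hFhat, Finset.sum_boole]
    rw [heq]
    apply Measurable.div_const
    apply Finset.measurable_sum
    intro i _
    refine Measurable.ite ?_ measurable_const measurable_const
    exact (hT0.comp (hZmeas i)) measurableSet_Ici
  -- pointwise convergence in measure of the empirical survival function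
  have hpt : ∀ c : ℝ, TendstoInMeasure P (fun n ω => Fhat n ω c) atTop (fun _ => G c) := by
    intro c
    have hae := empirical_slln P μ T0 hT0 Z hZmeas hZiid hZlaw c
    have hae2 : ∀ᵐ ω ∂P, Tendsto (fun n => Fhat n ω c) atTop (𝓝 (G c)) := by
      filter_upwards [hae] with ω hω
      have hcomp := hω.comp hNn
      have hGc : G c = (μ {x | c ≤ T0 x}).toReal := congrArg ENNReal.toReal (hIci c)
      rw [hGc]
      apply Tendsto.congr _ hcomp
      intro n
      rw [hFhat]
      rfl
    exact tendstoInMeasure_of_tendsto_ae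
      (fun n => (hFhatMeas n c).aestronglyMeasurable) hae2
  -- convergence in measure of G ∘ Tn
  have hB : TendstoInMeasure P (fun n ω => G (Tn n ω)) atTop (fun ω => G (T0 (X ω))) :=
    tendstoInMeasure_comp_continuous hGcont
      (fun n => (hTnmeas n).aestronglyMeasurable) hTn
  -- main argument
  rw [tendstoInMeasure_iff_dist]
  intro ε hε
  have hδ : (0:ℝ) < ε/3 := by linarith
  obtain ⟨a0, ha0⟩ := surv_tail_lo ν hδ
  obtain ⟨b0, hb0⟩ := surv_tail_hi ν hδ
  have hab : min a0 b0 ≤ b0 := min_le_right _ _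
  have ha' : 1 - ε/3 ≤ G (min a0 b0) := le_trans ha0 (hGanti (min_le_left _ _))
  obtain ⟨k, p, hp0, hpk, hgap⟩ :=
    grid_exists hGanti hGcont hG0 hG1 hδ hab ha' hb0
  -- inclusion of events
  have hincl : ∀ n, {ω | ε ≤ dist (Fhat n ω (Tn n ω)) (F (T0 (X ω)))} ⊆
      {ω | ε/3 ≤ dist (G (Tn n ω)) (G (T0 (X ω)))} ∪
      (⋃ j ∈ Finset.range (k+1), {ω | ε/3 ≤ dist (Fhat n ω (p j)) (G (p j))}) := by
    intro n ω hω
    simp only [Set.mem_setOf_eq] at hω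
    by_contra hcon
    simp only [Set.mem_union, Set.mem_iUnion, Set.mem_setOf_eq, Finset.mem_range,
      exists_prop, not_or, not_exists, not_and, not_le] at hcon
    obtain ⟨hB2, hA⟩ := hcon
    have hM : ∀ j ≤ k, |Fhat n ω (p j) - G (p j)| ≤ ε/3 := by
      intro j hj
      have := hA j (Nat.lt_succ_of_le hj)
      rw [Real.dist_eq] at this
      linarith
    have hdet := det_bound (hFanti n ω) hGanti (hF0 n ω) (hF1 n ω) hG0 hG1
      hδ.le hp0 hpk hgap hM (Tn n ω)
    rw [Real.dist_eq] at hB2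
    rw [Real.dist_eq, hGF] at hω
    have htri := abs_sub_le (Fhat n ω (Tn n ω)) (G (Tn n ω)) (G (T0 (X ω)))
    linarith
  -- measure bound
  have hbound : ∀ n, P {ω | ε ≤ dist (Fhat n ω (Tn n ω)) (F (T0 (X ω)))}
      ≤ P {ω | ε/3 ≤ dist (G (Tn n ω)) (G (T0 (X ω)))}
        + ∑ j ∈ Finset.range (k+1), P {ω | ε/3 ≤ dist (Fhat n ω (p j)) (G (p j))} := by
    intro n
    calc P {ω | ε ≤ dist (Fhat n ω (Tn n ω)) (F (T0 (X ω)))}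
        ≤ P ({ω | ε/3 ≤ dist (G (Tn n ω)) (G (T0 (X ω)))} ∪
            (⋃ j ∈ Finset.range (k+1), {ω | ε/3 ≤ dist (Fhat n ω (p j)) (G (p j))})) :=
          measure_mono (hincl n)
      _ ≤ P {ω | ε/3 ≤ dist (G (Tn n ω)) (G (T0 (X ω)))}
          + P (⋃ j ∈ Finset.range (k+1), {ω | ε/3 ≤ dist (Fhat n ω (p j)) (G (p j))}) :=
          measure_union_le _ _
      _ ≤ _ := by
          gcongr
          exact measure_biUnion_finset_le _ _
  have hlim : Tendsto (fun n => P {ω | ε/3 ≤ dist (G (Tn n ω)) (G (T0 (X ω)))}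
        + ∑ j ∈ Finset.range (k+1), P {ω | ε/3 ≤ dist (Fhat n ω (p j)) (G (p j))})
      atTop (𝓝 (0 + ∑ _j ∈ Finset.range (k+1), 0)) := by
    apply Tendsto.add (tendstoInMeasure_iff_dist.mp hB (ε/3) hδ)
    apply tendsto_finset_sum
    intro j _
    exact tendstoInMeasure_iff_dist.mp (hpt (p j)) (ε/3) hδ
  simp only [Finset.sum_const_zero, add_zero] at hlim
  exact tendsto_of_tendsto_of_tendsto_of_le_of_le tendsto_const_nhds hlim
    (fun n => zero_le) hbound
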